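/- Let S = k[x,y] be the standard graded polynomial ring over a field k, A the category of finitely presented graded S-modules, and C the thick subcategory of modules M with M_{≥d} = 0 for d sufficiently large. Then the quotient functor Q : A → A/C does not admit a right adjoint (section functor); i.e., C is not a localizing subcategory of A. -/

import Mathlib

open CategoryTheory Limits

/-- A `ℤ`-graded module over the standard graded polynomial ring `S = k[x,y]`, encoded by its
family of graded components `M n` together with the multiplication maps by the two variables
`x` and `y` (each of degree `1`), which commute with each other. -/
structure GrMod (k : Type) [Field k] where
  M : ℤ → ModuleCat k
  X : ∀ n : ℤ, M n ⟶ M (n + 1)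
  Y : ∀ n : ℤ, M n ⟶ M (n + 1)
  comm : ∀ n : ℤ, X n ≫ Y (n + 1) = Y n ≫ X (n + 1)

namespace GrMod

variable {k : Type} [Field k]

/-- A degree-`0` morphism of graded `k[x,y]`-modules. -/
@[ext]
structure Hom (M N : GrMod k) where
  f : ∀ n : ℤ, M.M n ⟶ N.M n
  commX : ∀ n : ℤ, M.X n ≫ f (n + 1) = f n ≫ N.X n
  commY : ∀ n : ℤ, M.Y n ≫ f (n + 1) = f n ≫ N.Y n

instance : Category (GrMod k) where
  Hom := Hom
  id M := ⟨fun n => 𝟙 (M.M n), by intro n; simp, by intro n; simp⟩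
  comp φ ψ := ⟨fun n => φ.f n ≫ ψ.f n,
    by intro n; rw [← Category.assoc, φ.commX, Category.assoc, ψ.commX, Category.assoc],
    by intro n; rw [← Category.assoc, φ.commY, Category.assoc, ψ.commY, Category.assoc]⟩
  id_comp φ := by apply Hom.ext; funext n; simp
  comp_id φ := by apply Hom.ext; funext n; simp
  assoc φ ψ χ := by apply Hom.ext; funext n; simp

/-- A graded `S`-submodule of a graded module: a family of `k`-subspaces closed under
multiplication by `x` and `y`. -/
structure SubFam (M : GrMod k) where
  N : ∀ n : ℤ, Submodule k (M.M n)
  mapX : ∀ n : ℤ, ∀ m ∈ N n, M.X n m ∈ N (n + 1)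
  mapY : ∀ n : ℤ, ∀ m ∈ N n, M.Y n m ∈ N (n + 1)

/-- A graded module is finitely generated if finitely many homogeneous elements generate it,
i.e. the only graded submodule containing them is the whole module.  (Over the Noetherian ring
`k[x,y]`, the finitely presented graded modules are exactly the finitely generated ones.) -/
def FG (M : GrMod k) : Prop :=
  ∃ (ι : Type) (_ : Finite ι) (g : ι → Σ n : ℤ, M.M n),
    ∀ T : SubFam M, (∀ i : ι, (g i).2 ∈ T.N (g i).1) → ∀ n : ℤ, T.N n = ⊤

/-- The class of morphisms of finitely presented graded modules whose kernel and cokernel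
vanish in all sufficiently high degrees, i.e. which are isomorphisms in all sufficiently high
degrees.  The Serre quotient `A/C` of the category `A` of finitely presented graded modules by
the subcategory `C` of modules vanishing in high degrees is the localization at this class. -/
def serreW (k : Type) [Field k] : MorphismProperty (ObjectProperty.FullSubcategory (FG (k := k))) :=
  fun _ _ φ => ∃ d : ℤ, ∀ n : ℤ, d ≤ n → Function.Bijective (φ.hom.f n)

end GrMod

universe u

namespace NoSec
open GrMod CategoryTheory

variable {k : Type} [Field k]

/-- The submodule of `k` which is everything if `c ≤ m` and zero otherwise. -/
def seg (k : Type) [Field k] (c m : ℤ) : Submodule k k := if c ≤ m then ⊤ else ⊥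

lemma mem_seg {c m : ℤ} (h : c ≤ m) (a : k) : a ∈ seg k c m := by
  simp only [seg, if_pos h]; trivial

lemma seg_mono {c m m' : ℤ} (h : m ≤ m') : seg k c m ≤ seg k c m' := by
  by_cases h1 : c ≤ m
  · exact le_of_le_of_eq le_top (by rw [seg, if_pos (h1.trans h)])
  · exact le_of_eq_of_le (by rw [seg, if_neg h1]) bot_le

lemma seg_le {c c' m : ℤ} (h : c' ≤ c) : seg k c m ≤ seg k c' m := by
  by_cases h1 : c ≤ m
  · exact le_of_le_of_eq le_top (by rw [seg, if_pos (h.trans h1)])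
  · exact le_of_eq_of_le (by rw [seg, if_neg h1]) bot_le

lemma seg_eq_zero {c m : ℤ} (h : ¬ c ≤ m) (x : seg k c m) : x = 0 := by
  have hx := x.2
  simp only [seg, if_neg h] at hx
  exact Subtype.ext (Submodule.mem_bot k |>.mp hx)

/-- The graded module `k[x]` shifted to start in degree `c` (with `y` acting by zero). -/
def ray (c : ℤ) : GrMod k where
  M m := ModuleCat.of k (ULift.{0} (seg k c m))
  X m := ModuleCat.ofHom (ULift.moduleEquiv.symm.toLinearMap ∘ₗ
      (Submodule.inclusion (seg_mono (by omega)) ∘ₗ ULift.moduleEquiv.toLinearMap))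
  Y _ := 0
  comm n := by
    have h1 : (0 : ModuleCat.of k (ULift.{0} (seg k c (n+1))) ⟶
        ModuleCat.of k (ULift.{0} (seg k c (n+1+1)))) = 0 := rfl
    simp

lemma ray_ext {c m : ℤ} (x y : (ray (k := k) c).M m) (h : x.down.1 = y.down.1) : x = y := by
  cases x; cases y; exact congrArg ULift.up (Subtype.ext h)

lemma rayX_val {c m : ℤ} (x : (ray (k := k) c).M m) :
    (((ray (k := k) c).X m) x).down.1 = x.down.1 := rfl

/-- The canonical element of value `1` in a degree `m ≥ c` of `ray c`. -/
def unit (c m : ℤ) (h : c ≤ m) : (ray (k := k) c).M m := ULift.up ⟨1, mem_seg h 1⟩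

lemma ray_fg (c : ℤ) : FG (ray (k := k) c) := by
  refine ⟨PUnit, inferInstance, fun _ => ⟨c, unit c c le_rfl⟩, fun T hT => ?_⟩
  have key : ∀ n : ℤ, c ≤ n → ∀ h : c ≤ n, unit (k := k) c n h ∈ T.N n := by
    refine fun n hn => Int.le_induction (motive := fun n _ => ∀ h : c ≤ n, unit (k := k) c n h ∈ T.N n) ?_ ?_ n hn
    · intro h; exact hT PUnit.unit
    · intro n hn ih h
      have he : unit (k := k) c (n+1) h = (ray c).X n (unit c n hn) :=
        ray_ext _ _ rfl
      rw [he]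
      exact T.mapX n _ (ih hn)
  intro n
  rw [Submodule.eq_top_iff']
  intro x
  by_cases hn : c ≤ n
  · have hx : x = x.down.1 • unit (k := k) c n hn := by apply ray_ext; exact (mul_one _).symm
    rw [hx]
    exact Submodule.smul_mem _ _ (key n hn hn)
  · have hx : x = 0 := by
      cases x with
      | up y => rw [seg_eq_zero hn y]; rfl
    rw [hx]; exact Submodule.zero_mem _

lemma mcomp {A B C : ModuleCat.{0} k} (F : A ⟶ B) (G : B ⟶ C) (x : A) :
    (F ≫ G) x = G (F x) := rfl

/-- Any two morphisms from `ray c` into a module vanishing in degrees `≤ c` agree. -/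
lemma hom_ext (c : ℤ) (W : GrMod k) (hW : ∀ m : ℤ, m ≤ c → ∀ x : W.M m, x = 0)
    (f g : GrMod.Hom (ray (k := k) c) W) : f = g := by
  have key : ∀ m : ℤ, c ≤ m → f.f m = g.f m := by
    refine fun m hm => Int.le_induction (motive := fun m _ => f.f m = g.f m) ?_ ?_ m hm
    · ext x
      rw [hW c le_rfl (f.f c x), hW c le_rfl (g.f c x)]
    · intro n hn ih
      ext x
      have hx : x = (ray (k := k) c).X n (ULift.up ⟨x.down.1, mem_seg hn _⟩) :=
        ray_ext _ _ rfl
      rw [hx]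
      change ((ray (k := k) c).X n ≫ f.f (n+1)) _ = ((ray (k := k) c).X n ≫ g.f (n+1)) _
      rw [f.commX n, g.commX n, ih]
  apply Hom.ext; funext m
  by_cases hm : c ≤ m
  · exact key m hm
  · ext x
    have hx : x = 0 := by
      cases x with
      | up y => rw [seg_eq_zero hm y]; rfl
    rw [hx, map_zero, map_zero]

/-- A finitely generated graded module vanishes in low degrees. -/
lemma fg_bound (W : GrMod k) (h : FG W) : ∃ d : ℤ, ∀ m : ℤ, m < d → ∀ x : W.M m, x = 0 := by
  obtain ⟨ι, hι, g, hg⟩ := h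
  haveI := hι
  obtain ⟨d, hd⟩ := (Set.finite_range (fun i => (g i).1)).bddBelow
  refine ⟨d, fun m hm x => ?_⟩
  have htop := hg
    { N := fun n => if d ≤ n then ⊤ else ⊥
      mapX := fun n y hy => by
        by_cases hn : d ≤ n
        · simp [show d ≤ n + 1 by omega]
        · have hy0 : y = 0 := by simpa [hn] using hy
          simp [hy0]
      mapY := fun n y hy => by
        by_cases hn : d ≤ n
        · simp [show d ≤ n + 1 by omega]
        · have hy0 : y = 0 := by simpa [hn] using hy
          simp [hy0] }
    (fun i => by simp [show d ≤ (g i).1 from hd ⟨i, rfl⟩]) m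
  simp only [if_neg (show ¬ d ≤ m by omega)] at htop
  have hx : x ∈ (⊥ : Submodule k (W.M m)) := by rw [htop]; trivial
  exact (Submodule.mem_bot k).mp hx

/-- The inclusion `ray c ⟶ ray c'` for `c' ≤ c`. -/
def inclHom (c c' : ℤ) (h : c' ≤ c) : GrMod.Hom (ray (k := k) c) (ray (k := k) c') where
  f m := ModuleCat.ofHom (ULift.moduleEquiv.symm.toLinearMap ∘ₗ
      (Submodule.inclusion (seg_le h) ∘ₗ ULift.moduleEquiv.toLinearMap))
  commX n := by ext x; rfl
  commY n := by
    ext x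
    exact ray_ext _ _ rfl

section Colimit

/-- Transition map of the direct system of components of a graded module along `x`. -/
def tl (M : GrMod k) : ∀ {i j : ℕ}, i ≤ j → (M.M (i : ℤ) →ₗ[k] M.M (j : ℤ)) :=
  fun {i j} h => Nat.leRec (motive := fun j _ => M.M (i : ℤ) →ₗ[k] M.M (j : ℤ))
    LinearMap.id
    (fun m _ φ =>
      LinearMap.comp (show M.M (m : ℤ) →ₗ[k] M.M ((m : ℤ) + 1) from (M.X (m : ℤ)).hom) φ) h

lemma tl_self (M : GrMod k) (i : ℕ) : tl M (le_refl i) = LinearMap.id :=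
  Nat.leRec_self _ _

lemma tl_succ (M : GrMod k) {i j : ℕ} (h : i ≤ j) (h2 : i ≤ j + 1) :
    tl M h2 = LinearMap.comp
      (show M.M (j : ℤ) →ₗ[k] M.M ((j : ℤ) + 1) from (M.X (j : ℤ)).hom) (tl M h) :=
  Nat.leRec_succ _ _ h

lemma tl_trans (M : GrMod k) {i j l : ℕ} (hij : i ≤ j) (hjl : j ≤ l)
    (x : M.M (i : ℤ)) : tl M hjl (tl M hij x) = tl M (hij.trans hjl) x := by
  induction l, hjl using Nat.le_induction with
  | base => rw [tl_self]; rfl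
  | succ l hl ih =>
    rw [tl_succ M hl (hl.trans l.le_succ), tl_succ M (hij.trans hl) (hij.trans (hl.trans l.le_succ))]
    exact congrArg (M.X (l : ℤ)) ih

lemma tl_comm {M N : GrMod k} (φ : GrMod.Hom M N) {i j : ℕ} (h : i ≤ j)
    (x : M.M (i : ℤ)) : φ.f (j : ℤ) (tl M h x) = tl N h (φ.f (i : ℤ) x) := by
  induction j, h using Nat.le_induction with
  | base => rw [tl_self, tl_self]; rfl
  | succ l hl ih =>
    rw [tl_succ M hl (hl.trans l.le_succ), tl_succ N hl (hl.trans l.le_succ)]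
    have hc := ConcreteCategory.congr_hom (φ.commX (l : ℤ)) (tl M hl x)
    have hc' : φ.f ((l : ℤ) + 1) (M.X (l : ℤ) (tl M hl x)) =
        N.X (l : ℤ) (φ.f (l : ℤ) (tl M hl x)) := hc
    exact hc'.trans (congrArg (N.X (l : ℤ)) ih)

instance dirsys (M : GrMod k) :
    DirectedSystem (fun d : ℕ => M.M (d : ℤ)) (fun i j h => tl M h) where
  map_self i x := by rw [tl_self]; rfl
  map_map := by intro a b c hij hjk x; exact tl_trans M hij hjk x

/-- The "germ at infinity" module: the direct limit of the components along `x`. -/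
abbrev DL (M : GrMod k) : Type :=
  Module.DirectLimit (R := k) (ι := ℕ) (fun d : ℕ => M.M (d : ℤ)) (fun i j h => tl M h)

/-- Canonical map to the germ module. -/
noncomputable abbrev toDL (M : GrMod k) (i : ℕ) : M.M (i : ℤ) →ₗ[k] DL M :=
  Module.DirectLimit.of k ℕ (fun d : ℕ => M.M (d : ℤ)) (fun i j h => tl M h) i

/-- The map induced on germ modules by a morphism of graded modules. -/
noncomputable def Fmap {A B : GrMod k} (φ : GrMod.Hom A B) : DL A →ₗ[k] DL B :=
  Module.DirectLimit.map
    (fun i : ℕ => show A.M (i : ℤ) →ₗ[k] B.M (i : ℤ) from (φ.f (i : ℤ)).hom)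
    (fun i j h => by ext x; exact tl_comm φ h x)

lemma Fmap_of {A B : GrMod k} (φ : GrMod.Hom A B) (i : ℕ) (x : A.M (i : ℤ)) :
    Fmap φ (toDL A i x) = toDL B i (φ.f (i : ℤ) x) :=
  Module.DirectLimit.map_apply_of _ _ _

/-- The germ-at-infinity functor. -/
noncomputable def Ffun : ObjectProperty.FullSubcategory (FG (k := k)) ⥤ ModuleCat.{0} k where
  obj A := ModuleCat.of k (DL A.obj)
  map {A B} φ := show ModuleCat.of k (DL A.obj) ⟶ ModuleCat.of k (DL B.obj) from ModuleCat.ofHom (Fmap φ.hom)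
  map_id A := by
    apply ModuleCat.hom_ext; apply LinearMap.ext
    intro z
    induction z using Module.DirectLimit.induction_on with
    | ih i x => exact Fmap_of _ i x
  map_comp {A B C} φ ψ := by
    apply ModuleCat.hom_ext; apply LinearMap.ext
    intro z
    induction z using Module.DirectLimit.induction_on with
    | ih i x =>
      show Fmap (φ ≫ ψ).hom (toDL A.obj i x) = Fmap ψ.hom (Fmap φ.hom (toDL A.obj i x))
      rw [Fmap_of, Fmap_of, Fmap_of]
      rfl

lemma Ffun_inverts : (serreW k).IsInvertedBy (Ffun (k := k)) := by
  intro A B φ hφ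
  obtain ⟨d, hd⟩ := hφ
  have hbij : Function.Bijective (Fmap φ.hom : DL A.obj →ₗ[k] DL B.obj) := by
    constructor
    · rw [injective_iff_map_eq_zero]
      intro z hz
      induction z using Module.DirectLimit.induction_on with
      | ih i x =>
        rw [show (Fmap φ.hom) (toDL A.obj i x) = toDL B.obj i (φ.hom.f (i : ℤ) x) from Fmap_of φ.hom i x]
          at hz
        obtain ⟨j, hij, hj0⟩ := Module.DirectLimit.of.zero_exact hz
        set l : ℕ := max j d.toNat with hldef
        have hjl : j ≤ l := le_max_left _ _
        have hdl : d ≤ (l : ℤ) :=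
          le_trans (Int.self_le_toNat d) (Int.ofNat_le.mpr (le_max_right _ _))
        have h1 : tl B.obj hjl (tl B.obj hij (φ.hom.f (i : ℤ) x)) = 0 := by
          rw [hj0, map_zero]
        rw [tl_trans] at h1
        rw [← tl_comm φ.hom (hij.trans hjl) x] at h1
        have h2 : tl A.obj (hij.trans hjl) x = 0 := by
          apply (hd (l : ℤ) hdl).1
          rw [h1, map_zero]
        have h3 : toDL A.obj i x = toDL A.obj l (tl A.obj (hij.trans hjl) x) :=
          (Module.DirectLimit.of_f (R := k) (ι := ℕ) (G := fun d : ℕ => A.obj.M (d : ℤ))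
            (f := fun i j h => tl A.obj h) (hij := hij.trans hjl) (x := x)).symm
        rw [h3, h2, map_zero]
    · intro z
      induction z using Module.DirectLimit.induction_on with
      | ih i x =>
        set l : ℕ := max i d.toNat with hldef
        have hil : i ≤ l := le_max_left _ _
        have hdl : d ≤ (l : ℤ) :=
          le_trans (Int.self_le_toNat d) (Int.ofNat_le.mpr (le_max_right _ _))
        obtain ⟨y, hy⟩ := (hd (l : ℤ) hdl).2 (tl B.obj hil x)
        refine ⟨toDL A.obj l y, ?_⟩
        rw [show (Fmap φ.hom) (toDL A.obj l y) = toDL B.obj l (φ.hom.f (l : ℤ) y) from Fmap_of φ.hom l y,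
          hy]
        exact Module.DirectLimit.of_f (R := k) (ι := ℕ) (G := fun d : ℕ => B.obj.M (d : ℤ))
          (f := fun i j h => tl B.obj h) (hij := hil) (x := x)
  let e : DL A.obj ≃ₗ[k] DL B.obj := LinearEquiv.ofBijective _ hbij
  have : Ffun.map φ = e.toModuleIso.hom := rfl
  rw [this]
  exact Iso.isIso_hom _

/-- The germ of the canonical generator of `ray 0` is nonzero. -/
lemma of_unit_ne_zero :
    toDL (ray (k := k) 0) 0 (unit 0 0 le_rfl) ≠ 0 := by
  intro h
  obtain ⟨j, hj, h0⟩ := Module.DirectLimit.of.zero_exact h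
  have hval : ∀ {a b : ℕ} (hab : a ≤ b) (x : (ray (k := k) 0).M (a : ℤ)),
      (tl (ray (k := k) 0) hab x).down.1 = x.down.1 := by
    intro a b hab x
    induction b, hab using Nat.le_induction with
    | base => rw [tl_self]; rfl
    | succ l hl ih =>
      rw [tl_succ _ hl (hl.trans l.le_succ)]
      exact ih
  have h1 : (tl (ray (k := k) 0) hj (unit 0 0 le_rfl)).down.1 = 1 := hval hj _
  rw [h0] at h1
  have h2 : (1 : k) = 0 := by rw [← h1]; rfl
  exact one_ne_zero h2

end Colimit

end NoSec

/-- Let `S = k[x,y]` be the standard graded polynomial ring over a field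
`k`, `A` the category of finitely presented graded `S`-modules and `C` the thick subcategory
of modules vanishing in all sufficiently high degrees.  Then the quotient functor
`Q : A ⥤ A/C` onto the Serre quotient (the localization of `A` at the morphisms with kernel
and cokernel in `C`) admits no right adjoint (section functor); i.e. `C` is not a localizing
subcategory of `A`. -/
theorem no_section_functor (k : Type) [Field k] :
    ¬ ∃ S : (GrMod.serreW k).Localization ⥤ ObjectProperty.FullSubcategory (GrMod.FG (k := k)),
        Nonempty ((GrMod.serreW k).Q ⊣ S) := by
  rintro ⟨S, ⟨adj⟩⟩
  let A0 : ObjectProperty.FullSubcategory (GrMod.FG (k := k)) := ⟨NoSec.ray 0, NoSec.ray_fg 0⟩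
  let W0 := S.obj ((GrMod.serreW k).Q.obj A0)
  obtain ⟨d, hd⟩ := NoSec.fg_bound W0.obj W0.property
  set c : ℤ := min (d - 1) 0 with hc
  let Ac : ObjectProperty.FullSubcategory (GrMod.FG (k := k)) := ⟨NoSec.ray c, NoSec.ray_fg c⟩
  let ι : A0 ⟶ Ac := ObjectProperty.homMk (NoSec.inclHom 0 c (by omega))
  have hι : GrMod.serreW k ι := by
    refine ⟨0, fun n hn => ⟨?_, ?_⟩⟩
    · intro x y hxy
      exact NoSec.ray_ext x y (congrArg (fun z => z.down.1) hxy)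
    · intro y
      exact ⟨ULift.up ⟨y.down.1, NoSec.mem_seg hn _⟩, NoSec.ray_ext _ _ rfl⟩
  haveI : IsIso ((GrMod.serreW k).Q.map ι) := (GrMod.serreW k).Q_inverts ι hι
  let z0 : A0 ⟶ A0 :=
    ObjectProperty.homMk (GrMod.Hom.mk (fun n => 0)
      (by intro n; simp)
      (by intro n; simp))
  have key : inv ((GrMod.serreW k).Q.map ι) =
      inv ((GrMod.serreW k).Q.map ι) ≫ (GrMod.serreW k).Q.map z0 := by
    apply (adj.homEquiv Ac ((GrMod.serreW k).Q.obj A0)).injective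
    ext1
    exact NoSec.hom_ext c W0.obj (fun m hm x => hd m (by omega) x) _ _
  have key2 : 𝟙 ((GrMod.serreW k).Q.obj A0) = (GrMod.serreW k).Q.map z0 :=
    (cancel_epi (inv ((GrMod.serreW k).Q.map ι))).1 (by rw [Category.comp_id]; exact key)
  let Fb := Localization.Construction.lift (NoSec.Ffun (k := k)) (NoSec.Ffun_inverts (k := k))
  have hfac : (GrMod.serreW k).Q ⋙ Fb = NoSec.Ffun (k := k) := Localization.Construction.fac _ _
  let α : (GrMod.serreW k).Q ⋙ Fb ≅ NoSec.Ffun (k := k) := eqToIso hfac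
  have hnat := α.hom.naturality z0
  have hQz : (((GrMod.serreW k).Q ⋙ Fb).map z0) = 𝟙 (((GrMod.serreW k).Q ⋙ Fb).obj A0) := by
    show Fb.map ((GrMod.serreW k).Q.map z0) = _
    rw [← key2, Fb.map_id]
    rfl
  rw [hQz, Category.id_comp] at hnat
  have hFz : 𝟙 (NoSec.Ffun.obj A0) = NoSec.Ffun.map z0 :=
    (cancel_epi (α.hom.app A0)).1 (by rw [Category.comp_id]; exact hnat)
  have heval := ConcreteCategory.congr_hom hFz
    (NoSec.toDL (NoSec.ray 0) 0 (NoSec.unit 0 0 le_rfl))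
  have hzero : NoSec.Ffun.map z0 (NoSec.toDL (NoSec.ray 0) 0 (NoSec.unit 0 0 le_rfl)) = 0 := by
    show NoSec.Fmap z0.hom (NoSec.toDL (NoSec.ray 0) 0 (NoSec.unit 0 0 le_rfl)) = 0
    rw [NoSec.Fmap_of]
    show NoSec.toDL (NoSec.ray 0) 0 0 = 0
    rw [map_zero]
  rw [hzero] at heval
  exact NoSec.of_unit_ne_zero heval
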